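/- Let (A, m) be an Artinian local ring and let B = A[X] be the polynomial ring in one variable over A. Then B is a weakly Arf ring if and only if m² = (0). In particular, if m² ≠ (0), then A is weakly Arf but the polynomial ring A[X] is not. -/

import Mathlib

open scoped TensorProduct

/-- `A` is a *weakly Arf ring*: whenever `x, y, z ∈ A` with `x` a non-zerodivisor on `A`
and the fractions `y/x` and `z/x` in the total ring of fractions `Q(A)` are integral
over `A`, then `y * z ∈ x A`. -/
def IsWeaklyArfRing (A : Type*) [CommRing A] : Prop :=
  ∀ (x y z : A) (hx : x ∈ nonZeroDivisors A),
    IsIntegral A (IsLocalization.mk' (FractionRing A) y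
      (⟨x, hx⟩ : nonZeroDivisors A)) →
    IsIntegral A (IsLocalization.mk' (FractionRing A) z
      (⟨x, hx⟩ : nonZeroDivisors A)) →
    y * z ∈ Ideal.span {x}

open Polynomial IsLocalRing

section Aux

variable {A : Type*} [CommRing A] [IsLocalRing A]

/-- If `m² = ⊥` then a nonzerodivisor of `A[X]` has nonzero image in `κ[X]`. -/
lemma aux_map_ne_zero (h2 : maximalIdeal A ^ 2 = ⊥) {x : A[X]}
    (hx : x ∈ nonZeroDivisors (Polynomial A)) :
    x.map (residue A) ≠ 0 := by
  intro h0
  have hcoeff : ∀ k, x.coeff k ∈ maximalIdeal A := by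
    intro k
    have h := congrArg (fun p => Polynomial.coeff p k) h0
    simp only [Polynomial.coeff_map, Polynomial.coeff_zero] at h
    exact Ideal.Quotient.eq_zero_iff_mem.mp h
  by_cases hm : maximalIdeal A = ⊥
  · have hx0 : x = 0 := Polynomial.ext fun k => by
      simpa [hm, Ideal.mem_bot] using hcoeff k
    have : (0 : A[X]) ∈ nonZeroDivisors (Polynomial A) := hx0 ▸ hx
    exact one_ne_zero ((mem_nonZeroDivisors_iff.mp this).2 1 (by simp))
  · obtain ⟨a, ha, hane⟩ := Submodule.exists_mem_ne_zero_of_ne_bot hm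
    have hCa : (C a) * x = 0 := by
      ext k
      have hmem : a * x.coeff k ∈ maximalIdeal A ^ 2 := by
        rw [pow_two]; exact Ideal.mul_mem_mul ha (hcoeff k)
      rw [h2, Ideal.mem_bot] at hmem
      simp [coeff_C_mul, hmem]
    have : (C a : A[X]) = 0 := (mem_nonZeroDivisors_iff.mp hx).2 _ hCa
    exact hane (by simpa using this)

/-- Key lemma: if `m² = ⊥` and `y/x` is integral over `A[X]`, then `x` divides `y`
modulo `m·A[X]`. -/
lemma aux_exists_q (h2 : maximalIdeal A ^ 2 = ⊥) {x y : A[X]}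
    (hx : x ∈ nonZeroDivisors (Polynomial A))
    (hy : IsIntegral (Polynomial A) (IsLocalization.mk' (FractionRing (Polynomial A)) y
      (⟨x, hx⟩ : nonZeroDivisors (Polynomial A)))) :
    ∃ q : A[X], ∀ k, (y - x * q).coeff k ∈ maximalIdeal A := by
  classical
  obtain ⟨p, pmonic, hp⟩ := hy
  set K := FractionRing (Polynomial A)
  have injK : Function.Injective (algebraMap (Polynomial A) K) :=
    IsFractionRing.injective _ _
  -- clear denominators: `y` is a root of `p.scaleRoots x`
  have h1 : (p.scaleRoots x).eval y = 0 := by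
    have hs := Polynomial.scaleRoots_aeval_eq_zero (r := x) hp
    have hspec := IsLocalization.mk'_spec' K y (⟨x, hx⟩ : nonZeroDivisors (Polynomial A))
    rw [show ((⟨x, hx⟩ : nonZeroDivisors (Polynomial A)) : A[X]) = x from rfl] at hspec
    rw [hspec] at hs
    rw [Polynomial.aeval_algebraMap_apply_eq_algebraMap_eval] at hs
    apply injK
    rw [map_zero]
    exact hs
  -- pass to the residue field
  set κ := ResidueField A
  set φ : A[X] →+* κ[X] := Polynomial.mapRingHom (residue A) with hφ
  have hφx : φ x ≠ 0 := aux_map_ne_zero h2 hx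
  have h3 : ((p.scaleRoots x).map φ).eval (φ y) = 0 := by
    rw [Polynomial.eval_map, Polynomial.eval₂_hom, h1, map_zero]
  have h4 : (p.scaleRoots x).map φ = (p.map φ).scaleRoots (φ x) :=
    Polynomial.map_scaleRoots p x φ (by simp [pmonic.leadingCoeff])
  -- work in the fraction field of `κ[X]`
  set F := FractionRing (κ[X])
  set f : κ[X] →+* F := algebraMap (κ[X]) F with hf
  have injF : Function.Injective f := IsFractionRing.injective _ _
  have hfx : f (φ x) ≠ 0 := fun h => hφx (injF (by simpa using h))
  set u : F := (f (φ x))⁻¹ * f (φ y) with hu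
  have hux : f (φ x) * u = f (φ y) := by
    rw [hu, ← mul_assoc, mul_inv_cancel₀ hfx, one_mul]
  have h5 : f (φ x) ^ (p.map φ).natDegree * Polynomial.eval₂ f u (p.map φ) = 0 := by
    rw [← Polynomial.scaleRoots_eval₂_mul, hux, Polynomial.eval₂_hom, ← h4, h3, map_zero]
  have h6 : Polynomial.eval₂ f u (p.map φ) = 0 := by
    rcases mul_eq_zero.mp h5 with h | h
    · exact absurd h (pow_ne_zero _ hfx)
    · exact h
  have hu_int : IsIntegral (κ[X]) u :=
    ⟨p.map φ, pmonic.map φ, h6⟩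
  obtain ⟨qbar, hqbar⟩ := IsIntegrallyClosed.isIntegral_iff.mp hu_int
  have hdvd : φ x * qbar = φ y := by
    apply injF
    rw [map_mul, hf, hqbar]
    exact hux
  obtain ⟨q, hq⟩ := Polynomial.map_surjective (residue A)
    Ideal.Quotient.mk_surjective qbar
  refine ⟨q, fun k => ?_⟩
  have hker : φ (y - x * q) = 0 := by
    rw [map_sub, map_mul, hφ]
    show y.map (residue A) - x.map (residue A) * q.map (residue A) = 0
    rw [hq]
    show (φ y) - (φ x) * qbar = 0
    rw [hdvd, sub_self]
  have h7 : ((y - x * q).map (residue A)).coeff k = 0 := by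
    rw [show (y - x * q).map (residue A) = φ (y - x * q) from rfl, hker,
      Polynomial.coeff_zero]
  rw [Polynomial.coeff_map] at h7
  exact Ideal.Quotient.eq_zero_iff_mem.mp h7

end Aux

/-- For an Artinian local ring `(A, m)`, the polynomial ring `A[X]` is weakly Arf iff
`m² = (0)`.  In particular, if `m² ≠ (0)`, then `A` is weakly Arf but `A[X]` is not. -/
theorem weaklyArf_polynomial_artinian (A : Type*) [CommRing A] [IsArtinianRing A]
    [IsLocalRing A] :
    (IsWeaklyArfRing (Polynomial A) ↔ IsLocalRing.maximalIdeal A ^ 2 = ⊥) ∧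
    (IsLocalRing.maximalIdeal A ^ 2 ≠ ⊥ →
      IsWeaklyArfRing A ∧ ¬ IsWeaklyArfRing (Polynomial A)) := by
  classical
  have main : IsWeaklyArfRing (Polynomial A) ↔ IsLocalRing.maximalIdeal A ^ 2 = ⊥ := by
    constructor
    · -- weakly Arf implies m² = 0
      intro hWA
      have hX : (X : A[X]) ∈ nonZeroDivisors (Polynomial A) :=
        monic_X.mem_nonZeroDivisors
      obtain ⟨k, hk⟩ := IsArtinianRing.isNilpotent_jacobson_bot (R := A)
      have hm : maximalIdeal A ^ k = ⊥ := by
        rwa [IsLocalRing.jacobson_eq_maximalIdeal ⊥ bot_ne_top] at hk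
      have hint : ∀ c ∈ maximalIdeal A,
          IsIntegral (Polynomial A) (IsLocalization.mk' (FractionRing (Polynomial A))
            (C c) (⟨X, hX⟩ : nonZeroDivisors (Polynomial A))) := by
        intro c hc
        set K := FractionRing (Polynomial A)
        set t := IsLocalization.mk' K (C c) (⟨X, hX⟩ : nonZeroDivisors (Polynomial A))
          with ht
        have hck : c ^ k = 0 := by
          have : c ^ k ∈ maximalIdeal A ^ k := Ideal.pow_mem_pow hc k
          rwa [hm, Ideal.mem_bot] at this
        have htk : t ^ k = 0 := by
          have hspec : t * algebraMap (Polynomial A) K X = algebraMap (Polynomial A) K (C c) :=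
            IsLocalization.mk'_spec K _ _
          have h1 : t ^ k * (algebraMap (Polynomial A) K X) ^ k = 0 := by
            rw [← mul_pow, hspec, ← map_pow, ← C.map_pow, hck, map_zero, map_zero]
          have hunit : IsUnit ((algebraMap (Polynomial A) K X) ^ k) :=
            (IsLocalization.map_units K (⟨X, hX⟩ : nonZeroDivisors (Polynomial A))).pow k
          obtain ⟨v, hv⟩ := hunit
          have h2' : t ^ k = t ^ k * (algebraMap (Polynomial A) K X) ^ k * ↑v⁻¹ := by
            rw [mul_assoc, ← hv, Units.mul_inv, mul_one]
          rw [h2', h1, zero_mul]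
        exact ⟨X ^ k, monic_X_pow k, by
          rw [← Polynomial.aeval_def, map_pow, Polynomial.aeval_X]; exact htk⟩
      have key : ∀ a ∈ maximalIdeal A, ∀ b ∈ maximalIdeal A, a * b = 0 := by
        intro a ha b hb
        have := hWA X (C a) (C b) hX (hint a ha) (hint b hb)
        rw [← C_mul] at this
        obtain ⟨g, hg⟩ := Ideal.mem_span_singleton'.mp this
        have := congrArg (fun p => Polynomial.coeff p 0) hg
        simpa [Polynomial.mul_coeff_zero] using this.symm
      have : maximalIdeal A ^ 2 ≤ ⊥ := by
        rw [pow_two]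
        refine Ideal.mul_le.mpr fun a ha b hb => ?_
        rw [Ideal.mem_bot]
        exact key a ha b hb
      exact le_bot_iff.mp this
    · -- m² = 0 implies weakly Arf
      intro h2
      intro x y z hx hy hz
      obtain ⟨q, hq⟩ := aux_exists_q h2 hx hy
      obtain ⟨q', hq'⟩ := aux_exists_q h2 hx hz
      set r := y - x * q with hr
      set r' := z - x * q' with hr'
      have hrr' : r * r' = 0 := by
        ext k
        rw [Polynomial.coeff_mul, Polynomial.coeff_zero]
        refine Finset.sum_eq_zero fun ij _ => ?_
        have : r.coeff ij.1 * r'.coeff ij.2 ∈ maximalIdeal A ^ 2 := by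
          rw [pow_two]; exact Ideal.mul_mem_mul (hq ij.1) (hq' ij.2)
        rwa [h2, Ideal.mem_bot] at this
      have hyz : y * z = x * (q * z + q' * y - x * q * q') + r * r' := by
        rw [hr, hr']; ring
      rw [hrr', add_zero] at hyz
      exact Ideal.mem_span_singleton'.mpr ⟨q * z + q' * y - x * q * q', by
        rw [mul_comm]; exact hyz.symm⟩
  refine ⟨main, fun hne => ⟨?_, fun h => hne (main.mp h)⟩⟩
  -- every Artinian ring is weakly Arf: nonzerodivisors are units
  intro x y z hx _ _
  have hinj : Function.Injective ((LinearMap.mul A A) x) := by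
    intro a b hab
    exact (mul_cancel_left_mem_nonZeroDivisors hx).mp hab
  have hsurj := IsArtinian.surjective_of_injective_endomorphism
    ((LinearMap.mul A A) x) hinj
  obtain ⟨a, ha⟩ := hsurj (y * z)
  exact Ideal.mem_span_singleton'.mpr ⟨a, by rw [mul_comm]; exact ha⟩
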